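/- Let a > 1 and 0 < j < a be integers with gcd(j,a) = 1, and let 𝓔 be a nontrivial Zeckendorf collection for positive integers, i.e., 𝓔 contains at least one element other than the zero function and the basis functions β^i. Then there is no sequence Q : {1,2,…} → ℕ with the unique 𝓔-representation property such that X_Q = {j + a·m : m = 1, 2, 3, …}. -/

import Mathlib

/-- The `i`-th basis coefficient function `β^i`. -/
def beta (i : ℕ) : ℕ → ℕ := fun k => if k = i then 1 else 0

/-- A coefficient function has finite support. -/
def FinSupp (ε : ℕ → ℕ) : Prop := (Function.support ε).Finite

/-- The ascending lexicographical order `μ <_a ν` on finite-support coefficient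
functions: there is a (necessarily largest) index `k` with `μ k < ν k` and
`μ j = ν j` for all `j > k`. -/
def AscLt (μ ν : ℕ → ℕ) : Prop := ∃ k, μ k < ν k ∧ ∀ j, k < j → μ j = ν j

/-- An ascendingly-ordered collection of coefficient functions: a set of
finite-support coefficient functions on the indices `{1,2,...}` (so vanishing
at the dummy index `0`) containing the zero function and every `β^i`. -/
def IsCollection (E : Set (ℕ → ℕ)) : Prop :=
  (∀ ε ∈ E, ε 0 = 0 ∧ FinSupp ε) ∧ (0 : ℕ → ℕ) ∈ E ∧ ∀ i, 1 ≤ i → beta i ∈ E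

/-- `ν` is the immediate successor of `μ` in `E`. -/
def IsImmSucc (E : Set (ℕ → ℕ)) (μ ν : ℕ → ℕ) : Prop :=
  ν ∈ E ∧ AscLt μ ν ∧ ∀ σ ∈ E, AscLt μ σ → σ = ν ∨ AscLt ν σ

/-- `ν` is the immediate predecessor of `μ` in `E`. -/
def IsImmPred (E : Set (ℕ → ℕ)) (μ ν : ℕ → ℕ) : Prop :=
  ν ∈ E ∧ AscLt ν μ ∧ ∀ σ ∈ E, AscLt σ μ → σ = ν ∨ AscLt σ ν

/-- A Zeckendorf collection for positive integers. -/
def IsZeckendorf (E : Set (ℕ → ℕ)) : Prop :=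
  IsCollection E ∧
  (∀ μ ∈ E, {σ | σ ∈ E ∧ AscLt σ μ}.Finite) ∧
  ∀ μ ∈ E, ∃ ν, IsImmSucc E μ ν ∧
    ((ν = fun k => beta 1 k + μ k) ∨
      ∃ n, 2 ≤ n ∧ ∃ δ, IsImmPred E (beta n) δ ∧
        (∀ j, 1 ≤ j → j < n → μ j = δ j) ∧
        (ν = fun k => beta n k + if n ≤ k then μ k else 0))

lemma ascLt_trans {μ ν σ : ℕ → ℕ} (h1 : AscLt μ ν) (h2 : AscLt ν σ) : AscLt μ σ := by
  obtain ⟨k, hk, hk'⟩ := h1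
  obtain ⟨l, hl, hl'⟩ := h2
  rcases lt_trichotomy k l with h | h | h
  · exact ⟨l, by rw [hk' l h]; exact hl, fun j hj => (hk' j (h.trans hj)).trans (hl' j hj)⟩
  · subst h
    exact ⟨k, hk.trans hl, fun j hj => (hk' j hj).trans (hl' j hj)⟩
  · exact ⟨k, hk.trans_eq (hl' k h), fun j hj => (hk' j hj).trans (hl' j (h.trans hj))⟩

lemma ascLt_irrefl (μ : ℕ → ℕ) : ¬ AscLt μ μ := fun ⟨_, hk, _⟩ => lt_irrefl _ hk

lemma ascLt_zero {μ : ℕ → ℕ} (hfin : FinSupp μ) (hne : μ ≠ 0) : AscLt 0 μ := by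
  have hne' : (Function.support μ).Nonempty := Function.support_nonempty_iff.mpr hne
  obtain ⟨k, hk, hmax⟩ : ∃ k ∈ Function.support μ, ∀ l ∈ Function.support μ, k ≤ l → k = l := by
    obtain ⟨k, hk, hm⟩ := Set.Finite.exists_maximalFor id _ hfin hne'
    exact ⟨k, hk, fun l hl hkl => le_antisymm hkl (hm hl hkl)⟩
  refine ⟨k, Nat.pos_of_ne_zero (Function.mem_support.mp hk), fun l hl => ?_⟩
  by_contra h
  have hl' : l ∈ Function.support μ := fun h0 => h h0.symm
  exact absurd (hmax l hl' hl.le) (Nat.ne_of_lt hl)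


/-- For `a > 1`, `0 < j < a` with `gcd j a = 1`, the congruence class
`{j + a m : m ≥ 1}` is not an `𝓔`-subset of `ℕ` for any nontrivial Zeckendorf
collection `𝓔`. -/
theorem congruence_class_not_E_subset (a j : ℕ) (ha : 1 < a) (hj0 : 0 < j)
    (hja : j < a) (hgcd : Nat.gcd j a = 1) (E : Set (ℕ → ℕ))
    (hE : IsZeckendorf E)
    (hnontriv : ∃ μ ∈ E, μ ≠ 0 ∧ ∀ i, 1 ≤ i → μ ≠ beta i) :
    ¬ ∃ Q : ℕ → ℕ,
        Set.InjOn (fun ε : ℕ → ℕ => ∑ᶠ k, ε k * Q k) E ∧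
        (fun ε : ℕ → ℕ => ∑ᶠ k, ε k * Q k) '' (E \ {0}) =
          {x : ℕ | ∃ m, 1 ≤ m ∧ x = j + a * m} := by
  rintro ⟨Q, hinj, himg⟩
  obtain ⟨⟨hmem, h0E, hbeta⟩, hfin, hsucc⟩ := hE
  -- the value of the sum on a basis function
  have hQval : ∀ n : ℕ, (∑ᶠ k, beta n k * Q k) = Q n := by
    intro n
    rw [finsum_eq_single _ n (fun x hx => by simp [beta, hx])]
    simp [beta]
  -- members of E \ {0} land in the progression
  have hX : ∀ μ ∈ E, μ ≠ (0 : ℕ → ℕ) → ∃ m, 1 ≤ m ∧ (∑ᶠ k, μ k * Q k) = j + a * m := by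
    intro μ hμ hμ0
    have h1 : (∑ᶠ k, μ k * Q k) ∈ {x : ℕ | ∃ m, 1 ≤ m ∧ x = j + a * m} := by
      rw [← himg]
      exact ⟨μ, ⟨hμ, by simpa using hμ0⟩, rfl⟩
    exact h1
  have hQn : ∀ n, 1 ≤ n → ∃ m, 1 ≤ m ∧ Q n = j + a * m := by
    intro n hn
    have := hX (beta n) (hbeta n hn)
      (by intro h; have := congrFun h n; simp [beta] at this)
    rwa [hQval n] at this
  -- key: no sum of two basis functions lies in E
  have hkey : ∀ n i : ℕ, 1 ≤ n → 1 ≤ i → (fun k => beta n k + beta i k) ∉ E := by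
    intro n i hn hi hmE
    have hne0 : (fun k => beta n k + beta i k) ≠ (0 : ℕ → ℕ) := by
      intro h; have := congrFun h n; simp [beta] at this
    obtain ⟨m3, hm3, hsum⟩ := hX _ hmE hne0
    have hfs : ∀ r : ℕ, (Function.support fun k => beta r k * Q k).Finite := by
      intro r
      apply Set.Finite.subset (Set.finite_singleton r)
      intro x hx
      simp only [Function.mem_support] at hx
      by_contra h
      simp only [Set.mem_singleton_iff] at h
      simp [beta, h] at hx
    have hcalc : (∑ᶠ k, (beta n k + beta i k) * Q k) = Q n + Q i := by
      simp only [add_mul]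
      rw [finsum_add_distrib (hfs n) (hfs i), hQval n, hQval i]
    obtain ⟨m1, hm1, h1⟩ := hQn n hn
    obtain ⟨m2, hm2, h2⟩ := hQn i hi
    rw [hcalc, h1, h2] at hsum
    have hdvd : (a : ℤ) ∣ (j : ℤ) := by
      refine ⟨(m3 : ℤ) - m1 - m2, ?_⟩
      have : (j : ℤ) + a * m1 + ((j : ℤ) + a * m2) = (j : ℤ) + a * m3 := by
        exact_mod_cast hsum
      ring_nf
      ring_nf at this
      linarith
    have h1 : (a : ℤ) ≤ (j : ℤ) := Int.le_of_dvd (by exact_mod_cast hj0) hdvd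
    have : a ≤ j := by exact_mod_cast h1
    omega
  -- pick a minimal nontrivial element of E
  obtain ⟨μ₀, hμ₀E, hμ₀ne, hμ₀nb⟩ := hnontriv
  set N : Set (ℕ → ℕ) :=
    {σ | σ ∈ E ∧ (σ ≠ 0 ∧ ∀ i, 1 ≤ i → σ ≠ beta i) ∧ (σ = μ₀ ∨ AscLt σ μ₀)} with hN
  have hNfin : N.Finite := by
    apply Set.Finite.subset ((hfin μ₀ hμ₀E).insert μ₀)
    rintro σ ⟨hσE, _, h | h⟩
    · exact Or.inl h
    · exact Or.inr ⟨hσE, h⟩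
  have hNne : N.Nonempty := ⟨μ₀, hμ₀E, ⟨hμ₀ne, hμ₀nb⟩, Or.inl rfl⟩
  obtain ⟨μ, hμN, hμmin⟩ :=
    Set.exists_min_image N (fun σ => {τ | τ ∈ E ∧ AscLt τ σ}.ncard) hNfin hNne
  obtain ⟨hμE, ⟨hμne, hμnb⟩, hμle⟩ := hμN
  -- every element of E strictly below μ is trivial
  have hbelow : ∀ σ ∈ E, AscLt σ μ → σ = 0 ∨ ∃ i, 1 ≤ i ∧ σ = beta i := by
    intro σ hσE hσμ
    by_contra h
    push_neg at h
    obtain ⟨h1, h2⟩ := h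
    have hσN : σ ∈ N := by
      refine ⟨hσE, ⟨h1, fun i hi => fun he => h2 i hi he⟩, Or.inr ?_⟩
      rcases hμle with h | h
      · rw [← h]; exact hσμ
      · exact ascLt_trans hσμ h
    have hsubset : {τ | τ ∈ E ∧ AscLt τ σ} ⊂ {τ | τ ∈ E ∧ AscLt τ μ} := by
      constructor
      · rintro τ ⟨hτE, hτσ⟩
        exact ⟨hτE, ascLt_trans hτσ hσμ⟩
      · intro hc
        exact ascLt_irrefl σ (hc ⟨hσE, hσμ⟩).2
    have hlt := Set.ncard_lt_ncard hsubset (hfin μ hμE)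
    have := hμmin σ hσN
    omega
  -- μ is the immediate successor of the top element τ below it
  have hBne : (0 : ℕ → ℕ) ∈ {σ | σ ∈ E ∧ AscLt σ μ} :=
    ⟨h0E, ascLt_zero (hmem μ hμE).2 hμne⟩
  obtain ⟨τ, hτB, hτmax⟩ :=
    Set.exists_max_image {σ | σ ∈ E ∧ AscLt σ μ}
      (fun σ => {ρ | ρ ∈ E ∧ AscLt ρ σ}.ncard) (hfin μ hμE) ⟨0, hBne⟩
  have hτtop : ∀ σ ∈ {σ | σ ∈ E ∧ AscLt σ μ}, ¬ AscLt τ σ := by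
    rintro σ ⟨hσE, hσμ⟩ hτσ
    have hsubset : {ρ | ρ ∈ E ∧ AscLt ρ τ} ⊂ {ρ | ρ ∈ E ∧ AscLt ρ σ} := by
      constructor
      · rintro ρ ⟨hρE, hρτ⟩
        exact ⟨hρE, ascLt_trans hρτ hτσ⟩
      · intro hc
        exact ascLt_irrefl τ (hc ⟨hτB.1, hτσ⟩).2
    have hlt := Set.ncard_lt_ncard hsubset (hfin σ hσE)
    have := hτmax σ ⟨hσE, hσμ⟩
    omega
  obtain ⟨ν, ⟨hνE, hτν, hνleast⟩, hstruct⟩ := hsucc τ hτB.1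
  have hνμ : ν = μ := by
    rcases hνleast μ hμE hτB.2 with h | h
    · exact h.symm
    · exact absurd hτν (hτtop ν ⟨hνE, h⟩)
  rw [hνμ] at hstruct
  have hτtriv := hbelow τ hτB.1 hτB.2
  rcases hstruct with heq | ⟨n, hn2, δ, _, _, heq⟩
  · -- μ = β¹ + τ
    rcases hτtriv with rfl | ⟨i, hi, rfl⟩
    · exact hμnb 1 le_rfl (by funext k; simp [heq])
    · exact hkey 1 i le_rfl hi (by rw [← heq]; exact hμE)
  · -- μ = βⁿ + τ↾≥n
    rcases hτtriv with rfl | ⟨i, hi, rfl⟩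
    · refine hμnb n (by omega) ?_
      funext k
      rw [heq]
      simp
    · by_cases hin : n ≤ i
      · have hμeq : μ = fun k => beta n k + beta i k := by
          funext k
          rw [heq]
          by_cases h : n ≤ k
          · simp [h]
          · have : beta i k = 0 := by
              simp only [beta, if_neg (by omega : k ≠ i)]
            simp [h, this]
        exact hkey n i (by omega) hi (by rw [← hμeq]; exact hμE)
      · refine hμnb n (by omega) ?_
        funext k
        rw [heq]
        by_cases h : n ≤ k
        · have : beta i k = 0 := by
            simp only [beta, if_neg (by omega : k ≠ i)]
          simp [h, this]
        · simp [h]
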